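/- The number of balanced partitions of a necklace of ktm beads into k parts achievable by at most s cuts is at most k^{s+1} (tm)^{s+1-k}. -/

import Mathlib

open scoped Classical

noncomputable section

/-- The number of cuts needed to realize the partition `P` of the positions of an open
necklace: the number of adjacent pairs of positions assigned to different parts. -/
def cutsOf {n k : ℕ} (P : Fin n → Fin k) : ℕ :=
  (Finset.univ.filter (fun p : Fin n × Fin n =>
    (p.1 : ℕ) + 1 = (p.2 : ℕ) ∧ P p.1 ≠ P p.2)).card

namespace NeckAux

variable {n k : ℕ}

/-- the set of cut positions -/
def Dset (P : Fin n → Fin k) : Finset (Fin n) :=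
  Finset.univ.filter (fun i : Fin n => ∃ h : (i : ℕ) + 1 < n, P i ≠ P ⟨(i : ℕ) + 1, h⟩)

lemma card_Dset (P : Fin n → Fin k) : (Dset P).card = cutsOf P := by
  classical
  have himg : ((Finset.univ.filter (fun p : Fin n × Fin n =>
      (p.1 : ℕ) + 1 = (p.2 : ℕ) ∧ P p.1 ≠ P p.2)).image Prod.fst) = Dset P := by
    ext i
    simp only [Finset.mem_image, Finset.mem_filter, Finset.mem_univ, true_and, Dset]
    constructor
    · rintro ⟨p, ⟨h1, h2⟩, rfl⟩
      have hlt : (p.1 : ℕ) + 1 < n := by rw [h1]; exact p.2.isLt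
      refine ⟨hlt, ?_⟩
      have : p.2 = ⟨(p.1 : ℕ) + 1, hlt⟩ := Fin.ext h1.symm
      rwa [← this]
    · rintro ⟨h1, h2⟩
      exact ⟨(i, ⟨(i : ℕ) + 1, h1⟩), ⟨rfl, h2⟩, rfl⟩
  rw [cutsOf, ← himg]
  rw [Finset.card_image_of_injOn]
  intro p hp q hq hpq
  simp only [Finset.coe_filter, Finset.mem_univ, true_and, Set.mem_setOf_eq] at hp hq
  have : (p.2 : ℕ) = (q.2 : ℕ) := by
    rw [← hp.1, ← hq.1, hpq]
  exact Prod.ext hpq (Fin.ext this)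

/-- the run index of a position -/
def rho (P : Fin n → Fin k) (x : Fin n) : ℕ :=
  ((Dset P).filter (fun i : Fin n => (i : ℕ) < (x : ℕ))).card

lemma rho_mono (P : Fin n → Fin k) {x y : Fin n} (h : (x : ℕ) ≤ (y : ℕ)) :
    rho P x ≤ rho P y := by
  apply Finset.card_le_card
  intro i hi
  simp only [Finset.mem_filter] at hi ⊢
  exact ⟨hi.1, hi.2.trans_le h⟩

lemma rho_le_card (P : Fin n → Fin k) (x : Fin n) : rho P x ≤ (Dset P).card :=
  Finset.card_le_card (Finset.filter_subset _ _)

lemma rho_zero (P : Fin n → Fin k) (hn : 0 < n) : rho P ⟨0, hn⟩ = 0 := by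
  unfold rho
  rw [Finset.card_eq_zero, Finset.filter_eq_empty_iff]
  intro i _; simp

lemma rho_succ (P : Fin n → Fin k) (x : Fin n) (h : (x : ℕ) + 1 < n) :
    rho P ⟨(x : ℕ) + 1, h⟩ = rho P x + (if x ∈ Dset P then 1 else 0) := by
  unfold rho
  have heq : ((Dset P).filter (fun i : Fin n => (i : ℕ) < (x : ℕ) + 1)) =
      ((Dset P).filter (fun i : Fin n => (i : ℕ) < (x : ℕ))) ∪
        ((Dset P).filter (fun i : Fin n => i = x)) := by
    rw [← Finset.filter_or]
    apply Finset.filter_congr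
    intro i _
    constructor
    · intro hi
      rcases Nat.lt_or_ge (i : ℕ) (x : ℕ) with h' | h'
      · exact Or.inl h'
      · exact Or.inr (Fin.ext (by omega))
    · rintro (h' | rfl)
      · omega
      · omega
  rw [heq, Finset.card_union_of_disjoint, Finset.filter_eq']
  · split <;> simp
  · rw [Finset.disjoint_left]
    intro i hi hi'
    simp only [Finset.mem_filter] at hi hi'
    omega


lemma rho_succ_le (P : Fin n → Fin k) (x : Fin n) (h : (x : ℕ) + 1 < n) :
    rho P ⟨(x : ℕ) + 1, h⟩ ≤ rho P x + 1 := by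
  rw [rho_succ P x h]; split <;> omega

lemma rho_le_succ (P : Fin n → Fin k) (x : Fin n) (h : (x : ℕ) + 1 < n) :
    rho P x ≤ rho P ⟨(x : ℕ) + 1, h⟩ := by
  rw [rho_succ P x h]; omega

lemma P_step (P : Fin n → Fin k) (x : Fin n) (h : (x : ℕ) + 1 < n)
    (heq : rho P ⟨(x : ℕ) + 1, h⟩ = rho P x) : P x = P ⟨(x : ℕ) + 1, h⟩ := by
  rw [rho_succ P x h] at heq
  have hx : x ∉ Dset P := by
    intro hmem; rw [if_pos hmem] at heq; omega
  by_contra hne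
  exact hx (by simp only [Dset, Finset.mem_filter, Finset.mem_univ, true_and]; exact ⟨h, hne⟩)

lemma P_eq_of_rho_eq_aux (P : Fin n → Fin k) :
    ∀ d : ℕ, ∀ x y : Fin n, (x : ℕ) + d = (y : ℕ) → rho P x = rho P y → P x = P y := by
  intro d
  induction d with
  | zero => intro x y hxy _; congr 1; exact Fin.ext (by omega)
  | succ d ih =>
    intro x y hxy hrho
    have hlt : (x : ℕ) + 1 < n := by have := y.isLt; omega
    set x' : Fin n := ⟨(x : ℕ) + 1, hlt⟩ with hx'
    have h1 : rho P x ≤ rho P x' := rho_le_succ P x hlt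
    have h2 : rho P x' ≤ rho P y := rho_mono P (by simp [hx']; omega)
    have hxx' : rho P x' = rho P x := by omega
    have := P_step P x hlt hxx'
    rw [this]
    exact ih x' y (by simp [hx']; omega) (by omega)

lemma P_eq_of_rho_eq (P : Fin n → Fin k) {x y : Fin n} (h : rho P x = rho P y) :
    P x = P y := by
  rcases Nat.le_total (x : ℕ) (y : ℕ) with hle | hle
  · exact P_eq_of_rho_eq_aux P ((y : ℕ) - (x : ℕ)) x y (by omega) h
  · exact (P_eq_of_rho_eq_aux P ((x : ℕ) - (y : ℕ)) y x (by omega) h.symm).symm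

lemma rho_last (P : Fin n → Fin k) (hn : 0 < n) :
    rho P ⟨n - 1, by omega⟩ = (Dset P).card := by
  unfold rho
  congr 1
  rw [Finset.filter_eq_self]
  intro i hi
  simp only [Dset, Finset.mem_filter, Finset.mem_univ, true_and] at hi
  obtain ⟨h, _⟩ := hi
  show (i : ℕ) < n - 1
  omega

lemma exists_rho_eq (P : Fin n → Fin k) (hn : 0 < n) {j : ℕ} (hj : j ≤ (Dset P).card) :
    ∃ x : Fin n, rho P x = j := by
  classical
  set T : Finset (Fin n) := Finset.univ.filter (fun x : Fin n => j ≤ rho P x) with hT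
  have hne : T.Nonempty := by
    refine ⟨⟨n - 1, by omega⟩, ?_⟩
    simp only [hT, Finset.mem_filter, Finset.mem_univ, true_and]
    rw [rho_last P hn]; exact hj
  set x := T.min' hne with hx
  have hxT : x ∈ T := T.min'_mem hne
  have hxj : j ≤ rho P x := by
    simpa only [hT, Finset.mem_filter, Finset.mem_univ, true_and] using hxT
  rcases Nat.eq_zero_or_pos (x : ℕ) with h0 | hpos
  · refine ⟨x, ?_⟩
    have : x = ⟨0, hn⟩ := Fin.ext h0
    rw [this] at hxj ⊢
    rw [rho_zero P hn] at hxj ⊢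
    omega
  · set y : Fin n := ⟨(x : ℕ) - 1, by omega⟩ with hy
    have hyT : y ∉ T := by
      intro hmem
      have := T.min'_le y hmem
      rw [← hx] at this
      have : (x : ℕ) ≤ (y : ℕ) := this
      simp [hy] at this
      omega
    have hyj : rho P y < j := by
      by_contra hge
      exact hyT (by simp only [hT, Finset.mem_filter, Finset.mem_univ, true_and]; omega)
    have hlt : (y : ℕ) + 1 < n := by simp [hy]; omega
    have hxy : x = ⟨(y : ℕ) + 1, hlt⟩ := Fin.ext (by simp [hy]; omega)
    have := rho_succ_le P y hlt
    rw [← hxy] at this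
    exact ⟨x, by omega⟩

/-- length of run `j` -/
def lenF (P : Fin n → Fin k) (j : ℕ) : ℕ :=
  (Finset.univ.filter (fun x : Fin n => rho P x = j)).card

/-- owner of run `j` -/
def ownF (hn : 0 < n) (P : Fin n → Fin k) (j : ℕ) : Fin k :=
  if h : ∃ x : Fin n, rho P x = j then P h.choose else P ⟨0, hn⟩

lemma ownF_eq (hn : 0 < n) (P : Fin n → Fin k) {x : Fin n} {j : ℕ} (hx : rho P x = j) :
    ownF hn P j = P x := by
  rw [ownF, dif_pos ⟨x, hx⟩]
  exact P_eq_of_rho_eq P ((Exists.choose_spec (⟨x, hx⟩ : ∃ x : Fin n, rho P x = j)).trans hx.symm)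

lemma lenF_pos (P : Fin n → Fin k) (hn : 0 < n) {j : ℕ} (hj : j ≤ (Dset P).card) :
    0 < lenF P j := by
  obtain ⟨x, hx⟩ := exists_rho_eq P hn hj
  apply Finset.card_pos.2
  exact ⟨x, by simp [hx]⟩

lemma lenF_eq_zero (P : Fin n → Fin k) {j : ℕ} (hj : (Dset P).card < j) :
    lenF P j = 0 := by
  rw [lenF, Finset.card_eq_zero, Finset.filter_eq_empty_iff]
  intro x _
  have := rho_le_card P x
  omega

lemma own_adjacent_ne (hn : 0 < n) (P : Fin n → Fin k) {j : ℕ}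
    (hj : j + 1 ≤ (Dset P).card) : ownF hn P j ≠ ownF hn P (j + 1) := by
  classical
  set A : Finset (Fin n) := Finset.univ.filter (fun x : Fin n => rho P x = j) with hA
  have hAne : A.Nonempty := by
    obtain ⟨x, hx⟩ := exists_rho_eq P hn (by omega : j ≤ (Dset P).card)
    exact ⟨x, by simp [hA, hx]⟩
  set x := A.max' hAne with hx
  have hxA : x ∈ A := A.max'_mem hAne
  have hxj : rho P x = j := by simpa [hA] using hxA
  have hlt : (x : ℕ) + 1 < n := by
    by_contra hge
    have hxn : (x : ℕ) = n - 1 := by have := x.isLt; omega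
    have : x = ⟨n - 1, by omega⟩ := Fin.ext hxn
    rw [this, rho_last P hn] at hxj
    omega
  set x' : Fin n := ⟨(x : ℕ) + 1, hlt⟩ with hx'
  have hge : j ≤ rho P x' := hxj ▸ rho_le_succ P x hlt
  have hle : rho P x' ≤ j + 1 := hxj ▸ rho_succ_le P x hlt
  have hne : rho P x' ≠ j := by
    intro hmem
    have : x' ∈ A := by simp [hA, hmem]
    have := A.le_max' x' this
    rw [← hx] at this
    have : (x' : ℕ) ≤ (x : ℕ) := this
    simp [hx'] at this
  have hx'j : rho P x' = j + 1 := by omega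
  have hxD : x ∈ Dset P := by
    by_contra hD
    rw [hx', rho_succ P x hlt, if_neg hD, hxj] at hx'j
    omega
  simp only [Dset, Finset.mem_filter, Finset.mem_univ, true_and] at hxD
  obtain ⟨h', hne'⟩ := hxD
  rw [ownF_eq hn P hxj, ownF_eq hn P hx'j]
  intro hcontra
  apply hne'
  have hfin : (⟨(x : ℕ) + 1, h'⟩ : Fin n) = x' := Fin.ext rfl
  rw [hfin]
  exact hcontra


lemma sum_len_owner (hn : 0 < n) (P : Fin n → Fin k) (c : Fin k) :
    (Finset.univ.filter (fun x : Fin n => P x = c)).card =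
      ∑ j ∈ (Finset.range ((Dset P).card + 1)).filter (fun j => ownF hn P j = c),
        lenF P j := by
  classical
  rw [Finset.card_eq_sum_card_fiberwise
    (f := fun x : Fin n => rho P x)
    (t := (Finset.range ((Dset P).card + 1)).filter (fun j => ownF hn P j = c))]
  · apply Finset.sum_congr rfl
    intro j hj
    simp only [Finset.mem_filter, Finset.mem_range] at hj
    unfold lenF
    congr 1
    ext x
    simp only [Finset.mem_filter, Finset.mem_univ, true_and]
    constructor
    · rintro ⟨_, h2⟩; exact h2
    · intro h2
      refine ⟨?_, h2⟩
      rw [← hj.2]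
      exact (ownF_eq hn P h2).symm
  · intro x hx
    simp only [Finset.mem_coe, Finset.mem_filter, Finset.mem_univ, true_and] at hx ⊢
    refine ⟨Finset.mem_range.2 (by have := rho_le_card P x; omega), ?_⟩
    rw [ownF_eq hn P rfl, hx]

lemma sum_len_range (P : Fin n → Fin k) (j : ℕ) :
    ∑ i ∈ Finset.range j, lenF P i =
      (Finset.univ.filter (fun x : Fin n => rho P x < j)).card := by
  classical
  rw [Finset.card_eq_sum_card_fiberwise (f := fun x : Fin n => rho P x)
    (t := Finset.range j)]
  · apply Finset.sum_congr rfl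
    intro i hi
    simp only [Finset.mem_range] at hi
    unfold lenF
    congr 1
    ext x
    simp only [Finset.mem_filter, Finset.mem_univ, true_and]
    constructor
    · intro h2; exact ⟨by omega, h2⟩
    · rintro ⟨_, h2⟩; exact h2
  · intro x hx
    simp only [Finset.mem_coe, Finset.mem_filter, Finset.mem_univ, true_and] at hx
    exact Finset.mem_range.2 hx

lemma card_val_lt (x : Fin n) :
    (Finset.univ.filter (fun y : Fin n => (y : ℕ) < (x : ℕ))).card = (x : ℕ) := by
  classical
  have heq : (Finset.univ.filter (fun y : Fin n => (y : ℕ) < (x : ℕ))) = Finset.Iio x := by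
    ext y
    simp only [Finset.mem_filter, Finset.mem_univ, true_and, Finset.mem_Iio, Fin.lt_def]
  rw [heq, Fin.card_Iio]

lemma rho_sandwich (P : Fin n → Fin k) (x : Fin n) :
    ∑ i ∈ Finset.range (rho P x), lenF P i ≤ (x : ℕ) ∧
      (x : ℕ) < ∑ i ∈ Finset.range (rho P x + 1), lenF P i := by
  classical
  constructor
  · rw [sum_len_range]
    calc (Finset.univ.filter (fun y : Fin n => rho P y < rho P x)).card
        ≤ (Finset.univ.filter (fun y : Fin n => (y : ℕ) < (x : ℕ))).card := by
          apply Finset.card_le_card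
          intro y hy
          simp only [Finset.mem_filter, Finset.mem_univ, true_and] at hy ⊢
          by_contra hge
          exact absurd (rho_mono P (by omega : (x : ℕ) ≤ (y : ℕ))) (by omega)
      _ = (x : ℕ) := card_val_lt x
  · rw [sum_len_range]
    have : (x : ℕ) + 1 = (Finset.univ.filter (fun y : Fin n => (y : ℕ) ≤ (x : ℕ))).card := by
      have h1 : (Finset.univ.filter (fun y : Fin n => (y : ℕ) ≤ (x : ℕ))) =
          insert x (Finset.univ.filter (fun y : Fin n => (y : ℕ) < (x : ℕ))) := by
        ext y
        simp only [Finset.mem_insert, Finset.mem_filter, Finset.mem_univ, true_and]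
        constructor
        · intro h; rcases Nat.lt_or_ge (y : ℕ) (x : ℕ) with h' | h'
          · exact Or.inr h'
          · exact Or.inl (Fin.ext (by omega))
        · rintro (rfl | h) <;> omega
      rw [h1, Finset.card_insert_of_notMem (by simp), card_val_lt x]
    have h2 : (Finset.univ.filter (fun y : Fin n => (y : ℕ) ≤ (x : ℕ))).card ≤
        (Finset.univ.filter (fun y : Fin n => rho P y < rho P x + 1)).card := by
      apply Finset.card_le_card
      intro y hy
      simp only [Finset.mem_filter, Finset.mem_univ, true_and] at hy ⊢
      have := rho_mono P hy
      omega
    omega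

lemma rho_eq_of_len_eq (P Q : Fin n → Fin k) (hlen : ∀ j, lenF P j = lenF Q j) :
    rho P = rho Q := by
  funext x
  obtain ⟨hP1, hP2⟩ := rho_sandwich P x
  obtain ⟨hQ1, hQ2⟩ := rho_sandwich Q x
  have hsum : ∀ j, ∑ i ∈ Finset.range j, lenF Q i = ∑ i ∈ Finset.range j, lenF P i := by
    intro j; exact Finset.sum_congr rfl (fun i _ => (hlen i).symm)
  rw [hsum] at hQ1 hQ2
  by_contra hne
  have hmono : ∀ a b : ℕ, a ≤ b →
      ∑ i ∈ Finset.range a, lenF P i ≤ ∑ i ∈ Finset.range b, lenF P i := by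
    intro a b hab
    exact Finset.sum_le_sum_of_subset (Finset.range_subset_range.2 hab)
  rcases Nat.lt_or_ge (rho P x) (rho Q x) with h | h
  · have := hmono (rho P x + 1) (rho Q x) (by omega)
    omega
  · have hlt : rho Q x < rho P x := by omega
    have := hmono (rho Q x + 1) (rho P x) (by omega)
    omega


/-- runs that are not the last run of their owner -/
def NLs (hn : 0 < n) (P : Fin n → Fin k) : Finset ℕ :=
  (Finset.range ((Dset P).card + 1)).filter (fun j =>
    ∃ j' ∈ Finset.range ((Dset P).card + 1), j < j' ∧ ownF hn P j' = ownF hn P j)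

lemma mem_NLs (hn : 0 < n) (P : Fin n → Fin k) (j : ℕ) :
    j ∈ NLs hn P ↔ j ≤ (Dset P).card ∧
      ∃ j', j' ≤ (Dset P).card ∧ j < j' ∧ ownF hn P j' = ownF hn P j := by
  unfold NLs
  simp only [Finset.mem_filter, Finset.mem_range]
  constructor
  · rintro ⟨h1, j', hj', hlt, ho⟩
    exact ⟨by omega, j', by omega, hlt, ho⟩
  · rintro ⟨h1, j', hj', hlt, ho⟩
    exact ⟨by omega, j', by omega, hlt, ho⟩

lemma NLs_subset (hn : 0 < n) (P : Fin n → Fin k) {j : ℕ} (hj : j ∈ NLs hn P) :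
    j ≤ (Dset P).card := ((mem_NLs hn P j).1 hj).1

def encO (hn : 0 < n) (P : Fin n → Fin k) (s : ℕ) : Fin (s + 1) → Fin k :=
  fun i => ownF hn P (min (i : ℕ) ((Dset P).card))

def encL (hn : 0 < n) (P : Fin n → Fin k) (sk a : ℕ) (ha : 0 < a) : Fin sk → Fin a :=
  fun i =>
    if h : (i : ℕ) < ((NLs hn P).sort (· ≤ ·)).length
    then ⟨(lenF P (((NLs hn P).sort (· ≤ ·))[(i : ℕ)]'h) - 1) % a, Nat.mod_lt _ ha⟩
    else ⟨0, ha⟩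

lemma encL_apply (hn : 0 < n) (P : Fin n → Fin k) (sk a : ℕ) (ha : 0 < a)
    (idx : ℕ) (hidx' : idx < sk) (h : idx < ((NLs hn P).sort (· ≤ ·)).length) :
    encL hn P sk a ha ⟨idx, hidx'⟩ =
      ⟨(lenF P (((NLs hn P).sort (· ≤ ·))[idx]'h) - 1) % a, Nat.mod_lt _ ha⟩ := by
  unfold encL
  rw [dif_pos h]

lemma card_NLs (hn : 0 < n) (hk : 0 < k) (P : Fin n → Fin k)
    (hpres : ∀ c : Fin k, ∃ j, j ≤ (Dset P).card ∧ ownF hn P j = c) :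
    (NLs hn P).card + k ≤ (Dset P).card + 1 := by
  classical
  have hsub : NLs hn P ⊆ Finset.range ((Dset P).card + 1) := by
    intro j hj
    rw [Finset.mem_range]
    have := NLs_subset hn P hj
    omega
  have hAne : ∀ c : Fin k,
      ((Finset.range ((Dset P).card + 1)).filter (fun j => ownF hn P j = c)).Nonempty := by
    intro c
    obtain ⟨j, hj1, hj2⟩ := hpres c
    refine ⟨j, ?_⟩
    rw [Finset.mem_filter, Finset.mem_range]
    exact ⟨by omega, hj2⟩
  set g : Fin k → ℕ := fun c =>
    ((Finset.range ((Dset P).card + 1)).filter (fun j => ownF hn P j = c)).max' (hAne c)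
    with hg
  have hgmem : ∀ c, g c ∈
      (Finset.range ((Dset P).card + 1)).filter (fun j => ownF hn P j = c) :=
    fun c => Finset.max'_mem _ _
  have hgrange : ∀ c, g c ∈ Finset.range ((Dset P).card + 1) :=
    fun c => (Finset.mem_filter.1 (hgmem c)).1
  have hgown : ∀ c, ownF hn P (g c) = c := fun c => (Finset.mem_filter.1 (hgmem c)).2
  have hgNL : ∀ c, g c ∉ NLs hn P := by
    intro c hmem
    rw [mem_NLs] at hmem
    obtain ⟨j', hj'r, hlt, hoeq⟩ := hmem.2
    have hj'mem : j' ∈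
        (Finset.range ((Dset P).card + 1)).filter (fun j => ownF hn P j = c) := by
      rw [Finset.mem_filter, Finset.mem_range]
      exact ⟨by omega, by rw [hoeq, hgown]⟩
    have hle' : j' ≤ g c := Finset.le_max' _ j' hj'mem
    omega
  have hk' : k ≤ (Finset.range ((Dset P).card + 1) \ NLs hn P).card := by
    have h2 : (Finset.univ : Finset (Fin k)).card ≤
        (Finset.range ((Dset P).card + 1) \ NLs hn P).card := by
      apply Finset.card_le_card_of_injOn g
      · intro c _
        exact Finset.mem_sdiff.2 ⟨hgrange c, hgNL c⟩
      · intro c₁ _ c₂ _ hgc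
        rw [← hgown c₁, ← hgown c₂, hgc]
    simpa using h2
  rw [Finset.card_sdiff_of_subset hsub, Finset.card_range] at hk'
  have := Finset.card_le_card hsub
  rw [Finset.card_range] at this
  omega

lemma lenF_le (hn : 0 < n) (P : Fin n → Fin k) {a : ℕ}
    (hbal : ∀ c : Fin k, (Finset.univ.filter (fun x : Fin n => P x = c)).card = a)
    {j : ℕ} (hj : j ≤ (Dset P).card) : lenF P j ≤ a := by
  have hsum := sum_len_owner hn P (ownF hn P j)
  rw [hbal] at hsum
  rw [hsum]
  apply Finset.single_le_sum (f := fun j' => lenF P j')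
  · intro i _; exact Nat.zero_le _
  · rw [Finset.mem_filter, Finset.mem_range]
    exact ⟨by omega, rfl⟩

lemma filter_own_eq (hn : 0 < n) (P : Fin n → Fin k) {j : ℕ}
    (hj : j ≤ (Dset P).card) (hjNL : j ∉ NLs hn P) :
    (Finset.range ((Dset P).card + 1)).filter (fun j' => ownF hn P j' = ownF hn P j)
      = insert j ((NLs hn P).filter (fun j' => ownF hn P j' = ownF hn P j)) := by
  classical
  ext j'
  rw [Finset.mem_filter, Finset.mem_range, Finset.mem_insert, Finset.mem_filter, mem_NLs]
  constructor
  · rintro ⟨hj'r, hoeq⟩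
    rcases eq_or_ne j' j with rfl | hne
    · exact Or.inl rfl
    · rcases Nat.lt_or_ge j' j with hlt | hge
      · exact Or.inr ⟨⟨by omega, j, by omega, hlt, hoeq.symm⟩, hoeq⟩
      · exfalso
        apply hjNL
        rw [mem_NLs]
        exact ⟨hj, j', by omega, by omega, hoeq⟩
  · rintro (rfl | ⟨⟨hj'r, _⟩, hoeq⟩)
    · exact ⟨by omega, rfl⟩
    · exact ⟨by omega, hoeq⟩

lemma balance_decomp (hn : 0 < n) (P : Fin n → Fin k) {a : ℕ}
    (hbal : ∀ c : Fin k, (Finset.univ.filter (fun x : Fin n => P x = c)).card = a)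
    {j : ℕ} (hj : j ≤ (Dset P).card) (hjNL : j ∉ NLs hn P) :
    a = lenF P j +
      ∑ j' ∈ (NLs hn P).filter (fun j' => ownF hn P j' = ownF hn P j), lenF P j' := by
  classical
  have hsum := sum_len_owner hn P (ownF hn P j)
  rw [hbal] at hsum
  rw [hsum, filter_own_eq hn P hj hjNL, Finset.sum_insert]
  intro hmem
  exact hjNL (Finset.mem_filter.1 hmem).1

theorem inj_main (hn : 0 < n) (hk : 0 < k) {a : ℕ} (ha : 0 < a) (sk s : ℕ)
    (P Q : Fin n → Fin k)
    (hPbal : ∀ c : Fin k, (Finset.univ.filter (fun x : Fin n => P x = c)).card = a)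
    (hQbal : ∀ c : Fin k, (Finset.univ.filter (fun x : Fin n => Q x = c)).card = a)
    (hPd : (Dset P).card ≤ s) (hQd : (Dset Q).card ≤ s)
    (hsk : s + 1 ≤ sk + k)
    (hO : encO hn P s = encO hn Q s)
    (hL : encL hn P sk a ha = encL hn Q sk a ha) : P = Q := by
  classical
  have hFG : ∀ i : ℕ, i ≤ s →
      ownF hn P (min i ((Dset P).card)) = ownF hn Q (min i ((Dset Q).card)) := by
    intro i hi
    have := congrFun hO ⟨i, by omega⟩
    simpa [encO] using this
  have hpres : ∀ (R : Fin n → Fin k),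
      (∀ c : Fin k, (Finset.univ.filter (fun x : Fin n => R x = c)).card = a) →
      ∀ c : Fin k, ∃ j, j ≤ (Dset R).card ∧ ownF hn R j = c := by
    intro R hRbal c
    have hpos : 0 < (Finset.univ.filter (fun x : Fin n => R x = c)).card := by
      rw [hRbal]; exact ha
    obtain ⟨x, hx⟩ := Finset.card_pos.1 hpos
    simp only [Finset.mem_filter, Finset.mem_univ, true_and] at hx
    exact ⟨rho R x, rho_le_card R x, by rw [ownF_eq hn R rfl, hx]⟩
  -- step B : same number of cuts
  have hd : (Dset P).card = (Dset Q).card := by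
    by_contra hne
    rcases Nat.lt_or_ge (Dset P).card (Dset Q).card with hlt | hge
    · have h1 := hFG ((Dset P).card) (by omega)
      have h2 := hFG ((Dset P).card + 1) (by omega)
      rw [min_self, min_eq_left (by omega)] at h1
      rw [min_eq_right (by omega), min_eq_left (by omega)] at h2
      exact own_adjacent_ne hn Q (by omega) (h1.symm.trans h2)
    · have hlt : (Dset Q).card < (Dset P).card := by omega
      have h1 := hFG ((Dset Q).card) (by omega)
      have h2 := hFG ((Dset Q).card + 1) (by omega)
      rw [min_eq_left (by omega), min_self] at h1
      rw [min_eq_left (by omega), min_eq_right (by omega)] at h2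
      exact own_adjacent_ne hn P (by omega) (h1.trans h2.symm)
  -- step C : same owners
  have hown : ∀ j, j ≤ (Dset P).card → ownF hn P j = ownF hn Q j := by
    intro j hj
    have := hFG j (by omega)
    rwa [min_eq_left hj, min_eq_left (by omega)] at this
  -- step D : same non-last runs
  have hNL : NLs hn P = NLs hn Q := by
    ext j
    rw [mem_NLs, mem_NLs]
    constructor
    · rintro ⟨h1, j', hj', hlt, hoeq⟩
      refine ⟨by omega, j', by omega, hlt, ?_⟩
      rw [← hown j' (by omega), ← hown j (by omega)]
      exact hoeq
    · rintro ⟨h1, j', hj', hlt, hoeq⟩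
      refine ⟨by omega, j', by omega, hlt, ?_⟩
      rw [hown j' (by omega), hown j (by omega)]
      exact hoeq
  -- step E : bound on number of non-last runs
  have hcardNL : (NLs hn P).card ≤ sk := by
    have := card_NLs hn hk P (hpres P hPbal)
    omega
  -- step G : lengths agree on non-last runs
  have hlenNL : ∀ j ∈ NLs hn P, lenF P j = lenF Q j := by
    intro j hj
    have hjr : j ≤ (Dset P).card := NLs_subset hn P hj
    have hjL : j ∈ (NLs hn P).sort (· ≤ ·) := (Finset.mem_sort _).2 hj
    obtain ⟨idx, hidx, hget⟩ := List.mem_iff_getElem.1 hjL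
    have hlensort : ((NLs hn P).sort (· ≤ ·)).length = (NLs hn P).card :=
      Finset.length_sort _
    have hidx' : idx < sk := by omega
    have hlistQ : (NLs hn Q).sort (· ≤ ·) = (NLs hn P).sort (· ≤ ·) := by rw [hNL]
    have hidxQ : idx < ((NLs hn Q).sort (· ≤ ·)).length := by rw [hlistQ]; exact hidx
    have heqP := encL_apply hn P sk a ha idx hidx' hidx
    have heqQ := encL_apply hn Q sk a ha idx hidx' hidxQ
    have hgetQ : ((NLs hn Q).sort (· ≤ ·))[idx]'hidxQ = j := by
      simp only [hlistQ]
      exact hget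
    rw [hget] at heqP
    rw [hgetQ] at heqQ
    have heq := congrFun hL ⟨idx, hidx'⟩
    rw [heqP, heqQ, Fin.mk.injEq] at heq
    have h1P : 1 ≤ lenF P j := lenF_pos P hn hjr
    have h1Q : 1 ≤ lenF Q j := lenF_pos Q hn (by omega)
    have h2P : lenF P j ≤ a := lenF_le hn P hPbal hjr
    have h2Q : lenF Q j ≤ a := lenF_le hn Q hQbal (by omega)
    rw [Nat.mod_eq_of_lt (by omega), Nat.mod_eq_of_lt (by omega)] at heq
    omega
  -- step H : all lengths agree
  have hlen : ∀ j, lenF P j = lenF Q j := by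
    intro j
    rcases Nat.lt_or_ge ((Dset P).card) j with hgt | hle
    · rw [lenF_eq_zero P hgt, lenF_eq_zero Q (by omega)]
    · by_cases hjNL : j ∈ NLs hn P
      · exact hlenNL j hjNL
      · have hPdec := balance_decomp hn P hPbal (j := j) hle hjNL
        have hQdec := balance_decomp hn Q hQbal (j := j) (by omega) (by rwa [← hNL])
        have hsets : (NLs hn Q).filter (fun j' => ownF hn Q j' = ownF hn Q j) =
            (NLs hn P).filter (fun j' => ownF hn P j' = ownF hn P j) := by
          ext j'
          rw [Finset.mem_filter, Finset.mem_filter, ← hNL]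
          constructor
          · rintro ⟨hj', ho⟩
            refine ⟨hj', ?_⟩
            rw [hown j' (NLs_subset hn P hj'), hown j hle]
            exact ho
          · rintro ⟨hj', ho⟩
            refine ⟨hj', ?_⟩
            rw [← hown j' (NLs_subset hn P hj'), ← hown j hle]
            exact ho
        rw [hsets] at hQdec
        have hsum_eq : ∑ j' ∈ (NLs hn P).filter (fun j' => ownF hn P j' = ownF hn P j),
            lenF Q j' = ∑ j' ∈ (NLs hn P).filter (fun j' => ownF hn P j' = ownF hn P j),
            lenF P j' := by
          apply Finset.sum_congr rfl
          intro j' hj'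
          exact (hlenNL j' (Finset.mem_filter.1 hj').1).symm
        rw [hsum_eq] at hQdec
        omega
  -- conclusion
  have hrho : rho P = rho Q := rho_eq_of_len_eq P Q hlen
  funext x
  have h1 : P x = ownF hn P (rho P x) := (ownF_eq hn P rfl).symm
  have h2 : Q x = ownF hn Q (rho Q x) := (ownF_eq hn Q rfl).symm
  rw [h1, h2, ← hrho]
  exact hown (rho P x) (rho_le_card P x)

end NeckAux

/-- The number of balanced partitions (each of the `k` parts receiving exactly `t*m` of
the `k*t*m` positions) achievable by at most `s` cuts is at most
`k^(s+1) * (t*m)^(s+1-k)`. -/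


theorem stmt6 (k t m s : ℕ) (hk : 0 < k) (ht : 0 < t) (hm : 0 < m) (hs : k ≤ s + 1) :
    (Finset.univ.filter (fun P : Fin (k * t * m) → Fin k =>
        (∀ j : Fin k, (Finset.univ.filter (fun p => P p = j)).card = t * m) ∧
        cutsOf P ≤ s)).card
      ≤ k ^ (s + 1) * (t * m) ^ (s + 1 - k) := by

  classical
  have hn : 0 < k * t * m := by positivity
  have ha : 0 < t * m := by positivity
  have hcard : ((Finset.univ :
      Finset ((Fin (s + 1) → Fin k) × (Fin (s + 1 - k) → Fin (t * m))))).card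
      = k ^ (s + 1) * (t * m) ^ (s + 1 - k) := by
    rw [Finset.card_univ]
    simp [Fintype.card_fun]
  rw [← hcard]
  apply Finset.card_le_card_of_injOn
    (fun P => (NeckAux.encO hn P s, NeckAux.encL hn P (s + 1 - k) (t * m) ha))
  · intro P _
    exact Finset.mem_univ _
  · intro P hP Q hQ hPQ
    simp only [Finset.coe_filter, Finset.mem_univ, true_and, Set.mem_setOf_eq] at hP hQ
    have hPd : (NeckAux.Dset P).card ≤ s := by
      rw [NeckAux.card_Dset]; exact hP.2
    have hQd : (NeckAux.Dset Q).card ≤ s := by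
      rw [NeckAux.card_Dset]; exact hQ.2
    have h1 := congrArg Prod.fst hPQ
    have h2 := congrArg Prod.snd hPQ
    exact NeckAux.inj_main hn hk ha (s + 1 - k) s P Q hP.1 hQ.1 hPd hQd
      (by omega) h1 h2

end
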